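/- Let n ≥ 1, let ρ be a positive semidefinite 2ⁿ×2ⁿ complex matrix with tr(ρ) = 1, and let O be a Hermitian 2ⁿ×2ⁿ complex matrix with tr(O) = 0. Define 𝒞⁽ⁱⁱⁱ⁾ = Σ_{x,y ∈ {0,1}ⁿ} [ ( |y x x⟩ + |x y x⟩ + |x x y⟩ )⟨y y y| + |y y y⟩( ⟨y x x| + ⟨x y x| + ⟨x x y| ) ], a matrix indexed by triples of bit strings. Then | tr( 𝒞⁽ⁱⁱⁱ⁾ (ρ ⊗ O ⊗ O) ) | ≤ 6 tr(O²). -/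

import Mathlib

open Finset Matrix
open scoped ComplexOrder

/-- Bit strings of length `n`. -/
abbrev Bits (n : ℕ) := Fin n → Fin 2

/-- Triples of bit strings. -/
abbrev Bits3 (n : ℕ) := Bits n × Bits n × Bits n

/-- The standard basis vector `|a b c⟩` of `ℂ^{({0,1}ⁿ)³}`. -/
def ket3 {n : ℕ} (a b c : Bits n) : Bits3 n → ℂ :=
  fun p => if p = (a, b, c) then 1 else 0

/-- The Kronecker product `P ⊗ Q ⊗ R`, a matrix indexed by triples of bit strings. -/
def kron3 {ι : Type*} (P Q R : Matrix ι ι ℂ) : Matrix (ι × ι × ι) (ι × ι × ι) ℂ :=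
  Matrix.of fun p q => P p.1 q.1 * Q p.2.1 q.2.1 * R p.2.2 q.2.2

/-- The matrix `𝒞⁽ⁱⁱⁱ⁾ = Σ_{x,y} [(|yxx⟩+|xyx⟩+|xxy⟩)⟨yyy| + |yyy⟩(⟨yxx|+⟨xyx|+⟨xxy|)]`. -/
noncomputable def Ciii (n : ℕ) : Matrix (Bits3 n) (Bits3 n) ℂ :=
  ∑ x : Bits n, ∑ y : Bits n,
    (Matrix.vecMulVec (ket3 y x x + ket3 x y x + ket3 x x y) (ket3 y y y)
      + Matrix.vecMulVec (ket3 y y y) (ket3 y x x + ket3 x y x + ket3 x x y))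

lemma trace_ketket {n : ℕ} (a b c d e f : Bits n) (M : Matrix (Bits3 n) (Bits3 n) ℂ) :
    (Matrix.vecMulVec (ket3 a b c) (ket3 d e f) * M).trace = M (d,e,f) (a,b,c) := by
  simp [Matrix.trace, Matrix.mul_apply, Matrix.vecMulVec_apply, ket3, Matrix.diag,
    ite_mul, Finset.sum_ite_eq]

lemma vecMulVec_add_left {ι : Type*} (u v w : ι → ℂ) :
    Matrix.vecMulVec (u + v) w = Matrix.vecMulVec u w + Matrix.vecMulVec v w := by
  ext i j; simp [Matrix.vecMulVec_apply, add_mul]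

lemma vecMulVec_add_right {ι : Type*} (u v w : ι → ℂ) :
    Matrix.vecMulVec u (v + w) = Matrix.vecMulVec u v + Matrix.vecMulVec u w := by
  ext i j; simp [Matrix.vecMulVec_apply, mul_add]

lemma trace_expand {n : ℕ} (ρ O : Matrix (Bits n) (Bits n) ℂ) :
    (Ciii n * kron3 ρ O O).trace =
    ∑ x : Bits n, ∑ y : Bits n,
      (ρ y y * O y x * O y x + ρ y x * O y y * O y x + ρ y x * O y x * O y y
        + ρ y y * O x y * O x y + ρ x y * O y y * O x y + ρ x y * O x y * O y y) := by
  simp only [Ciii, Matrix.sum_mul, Matrix.trace_sum]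
  refine Finset.sum_congr rfl fun x _ => Finset.sum_congr rfl fun y _ => ?_
  rw [Matrix.add_mul, Matrix.trace_add, vecMulVec_add_left, vecMulVec_add_left,
    vecMulVec_add_right, vecMulVec_add_right, Matrix.add_mul, Matrix.add_mul,
    Matrix.add_mul, Matrix.add_mul, Matrix.trace_add, Matrix.trace_add, Matrix.trace_add,
    Matrix.trace_add, trace_ketket, trace_ketket, trace_ketket, trace_ketket, trace_ketket,
    trace_ketket]
  simp [kron3]
  ring

open scoped MatrixOrder in
lemma entry_sq_le {n : ℕ} {ρ : Matrix (Bits n) (Bits n) ℂ} (hρ : ρ.PosSemidef)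
    (x y : Bits n) : (‖ρ x y‖)^2 ≤ (ρ x x).re * (ρ y y).re := by
  set B := CFC.sqrt ρ with hB
  have hBH : B.IsHermitian := (CFC.sqrt_nonneg ρ).posSemidef.1
  have hBB : B * B = ρ := CFC.sqrt_mul_sqrt_self ρ hρ.nonneg
  have hentry : ∀ a b : Bits n, ρ a b = ∑ k, (starRingEnd ℂ) (B k a) * B k b := by
    intro a b
    rw [← hBB, Matrix.mul_apply]
    refine Finset.sum_congr rfl fun k _ => ?_
    have : B a k = (starRingEnd ℂ) (B k a) := by
      conv_lhs => rw [← hBH]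
      simp [Matrix.conjTranspose_apply]
    rw [this]
  have hdiag : ∀ a : Bits n, (ρ a a).re = ∑ k, (‖B k a‖)^2 := by
    intro a
    rw [hentry a a]
    rw [Complex.re_sum]
    refine Finset.sum_congr rfl fun k _ => ?_
    rw [mul_comm, Complex.mul_conj]
    simp [Complex.sq_norm]
  have h1 : ‖ρ x y‖ ≤ ∑ k, ‖B k x‖ * ‖B k y‖ := by
    rw [hentry x y]
    refine (norm_sum_le _ _).trans (le_of_eq ?_)
    refine Finset.sum_congr rfl fun k _ => ?_
    simp [_root_.map_mul]
  calc (‖ρ x y‖)^2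
      ≤ (∑ k, ‖B k x‖ * ‖B k y‖)^2 := by
        apply pow_le_pow_left₀ (norm_nonneg _) h1
    _ ≤ (∑ k, (‖B k x‖)^2) * (∑ k, (‖B k y‖)^2) :=
        Finset.sum_mul_sq_le_sq_mul_sq _ _ _
    _ = (ρ x x).re * (ρ y y).re := by rw [hdiag, hdiag]

lemma key_ineq {a b c u v : ℝ} (ha : 0 ≤ a) (hb : 0 ≤ b) (hc : 0 ≤ c) (hu : 0 ≤ u)
    (hv : 0 ≤ v) (h : c^2 ≤ a * b) : 2 * (c * u * v) ≤ b * u^2 + a * v^2 := by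
  have hP : 0 ≤ 2 * (c * u * v) := by positivity
  have hQ : 0 ≤ b * u^2 + a * v^2 := by positivity
  have h1 : (2 * (c * u * v))^2 ≤ (b * u^2 + a * v^2)^2 := by
    nlinarith [sq_nonneg (b*u^2 - a*v^2),
      mul_le_mul_of_nonneg_right h (mul_nonneg (sq_nonneg u) (sq_nonneg v))]
  nlinarith [h1, mul_nonneg hP hQ]

lemma tri6 (a b c d e f : ℂ) :
    ‖a + b + c + d + e + f‖ ≤ ‖a‖ + ‖b‖ + ‖c‖
      + ‖d‖ + ‖e‖ + ‖f‖ :=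
  le_trans (norm_add_le _ _) (add_le_add
    (le_trans (norm_add_le _ _) (add_le_add
      (le_trans (norm_add_le _ _) (add_le_add
        (le_trans (norm_add_le _ _) (add_le_add
          (norm_add_le _ _) le_rfl)) le_rfl)) le_rfl)) le_rfl)

set_option maxHeartbeats 1000000 in
/-- `|tr(𝒞⁽ⁱⁱⁱ⁾ (ρ ⊗ O ⊗ O))| ≤ 6 tr(O²)`. -/
theorem Ciii_bound (n : ℕ) (hn : 1 ≤ n)
    (ρ O : Matrix (Bits n) (Bits n) ℂ)
    (hρ : ρ.PosSemidef) (hρtr : ρ.trace = 1)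
    (hO : O.IsHermitian) (hOtr : O.trace = 0) :
    ‖(Ciii n * kron3 ρ O O).trace‖ ≤ 6 * ((O * O).trace).re := by
  -- diagonal of ρ is real and nonneg
  have hdiag : ∀ y : Bits n, 0 ≤ (ρ y y).re ∧ (ρ y y).im = 0 := by
    intro y
    have h := hρ.dotProduct_mulVec_nonneg (Pi.single y 1)
    have he : dotProduct (star (Pi.single y 1)) (ρ *ᵥ Pi.single y 1) = ρ y y := by
      simp [dotProduct, Matrix.mulVec, Pi.single_apply, apply_ite (star : ℂ → ℂ),
        ite_mul, mul_ite, Finset.sum_ite_eq, Finset.sum_ite_eq']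
    rw [he] at h
    rw [Complex.le_def] at h
    exact ⟨by simpa using h.1, by simpa using h.2.symm⟩
  have habsdiag : ∀ y : Bits n, ‖ρ y y‖ = (ρ y y).re := by
    intro y
    have h1 : ρ y y = ((ρ y y).re : ℂ) := Complex.ext rfl (by simp [(hdiag y).2])
    conv_lhs => rw [h1]
    rw [Complex.norm_real, Real.norm_eq_abs]
    exact abs_of_nonneg (hdiag y).1
  -- diagonal entries are at most 1
  have htr1 : ∑ x : Bits n, (ρ x x).re = 1 := by
    have := congrArg Complex.re hρtr
    simpa [Matrix.trace, Matrix.diag, Complex.re_sum] using this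
  have hle1 : ∀ y : Bits n, (ρ y y).re ≤ 1 := by
    intro y
    rw [← htr1]
    exact Finset.single_le_sum (fun x _ => (hdiag x).1) (Finset.mem_univ y)
  -- Hermitian symmetry
  have hOsym : ∀ x y : Bits n, ‖O x y‖ = ‖O y x‖ := by
    intro x y
    have h1 : O x y = (starRingEnd ℂ) (O y x) := by
      conv_lhs => rw [← hO]
      simp [Matrix.conjTranspose_apply]
    simp [h1]
  have hρsym : ∀ x y : Bits n, ‖ρ x y‖ = ‖ρ y x‖ := by
    intro x y
    have h1 : ρ x y = (starRingEnd ℂ) (ρ y x) := by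
      conv_lhs => rw [← hρ.1]
      simp [Matrix.conjTranspose_apply]
    simp [h1]
  -- trace of O² as a sum of squared moduli
  have hT : ((O * O).trace).re = ∑ y : Bits n, ∑ x : Bits n, (‖O y x‖)^2 := by
    have h1 : (O * O).trace = ∑ y : Bits n, ∑ x : Bits n, O y x * O x y := by
      simp [Matrix.trace, Matrix.diag, Matrix.mul_apply]
    rw [h1, Complex.re_sum]
    refine Finset.sum_congr rfl fun y _ => ?_
    rw [Complex.re_sum]
    refine Finset.sum_congr rfl fun x _ => ?_
    have hc : O x y = (starRingEnd ℂ) (O y x) := by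
      conv_lhs => rw [← hO]
      simp [Matrix.conjTranspose_apply]
    rw [hc, Complex.mul_conj]
    simp [Complex.sq_norm]
  -- pointwise bound
  have hpoint : ∀ x y : Bits n,
      ‖ρ y y * O y x * O y x + ρ y x * O y y * O y x + ρ y x * O y x * O y y
        + ρ y y * O x y * O x y + ρ x y * O y y * O x y + ρ x y * O x y * O y y‖
      ≤ 4 * (ρ y y).re * (‖O y x‖)^2
        + 2 * (ρ x x).re * (‖O y y‖)^2 := by
    intro x y
    have key : 2 * (‖ρ y x‖ * (‖O y y‖) * (‖O y x‖)) ≤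
        (ρ x x).re * (‖O y y‖)^2 + (ρ y y).re * (‖O y x‖)^2 := by
      apply key_ineq (hdiag y).1 (hdiag x).1 (norm_nonneg _)
        (norm_nonneg _) (norm_nonneg _)
      exact entry_sq_le hρ y x
    refine (tri6 _ _ _ _ _ _).trans ?_
    simp only [norm_mul, habsdiag y, hρsym x y, hOsym x y]
    nlinarith [key]
  -- assemble
  rw [trace_expand, hT]
  calc ‖∑ x : Bits n, ∑ y : Bits n,
        (ρ y y * O y x * O y x + ρ y x * O y y * O y x + ρ y x * O y x * O y y
          + ρ y y * O x y * O x y + ρ x y * O y y * O x y + ρ x y * O x y * O y y)‖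
      ≤ ∑ x : Bits n, ∑ y : Bits n,
        (4 * (ρ y y).re * (‖O y x‖)^2
          + 2 * (ρ x x).re * (‖O y y‖)^2) := by
        refine (norm_sum_le _ _).trans ?_
        refine Finset.sum_le_sum fun x _ => ?_
        refine (norm_sum_le _ _).trans ?_
        exact Finset.sum_le_sum fun y _ => hpoint x y
    _ = (∑ x : Bits n, ∑ y : Bits n, 4 * (ρ y y).re * (‖O y x‖)^2)
        + (∑ x : Bits n, ∑ y : Bits n, 2 * (ρ x x).re * (‖O y y‖)^2) := by
        simp only [Finset.sum_add_distrib]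
    _ ≤ 4 * (∑ y : Bits n, ∑ x : Bits n, (‖O y x‖)^2)
        + 2 * (∑ y : Bits n, ∑ x : Bits n, (‖O y x‖)^2) := by
        have h1 : (∑ x : Bits n, ∑ y : Bits n, 4 * (ρ y y).re * (‖O y x‖)^2)
            ≤ 4 * (∑ y : Bits n, ∑ x : Bits n, (‖O y x‖)^2) := by
          rw [Finset.sum_comm, Finset.mul_sum]
          refine Finset.sum_le_sum fun y _ => ?_
          rw [Finset.mul_sum]
          refine Finset.sum_le_sum fun x _ => ?_
          calc 4 * (ρ y y).re * (‖O y x‖)^2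
              ≤ 4 * 1 * (‖O y x‖)^2 := by
                have := hle1 y
                nlinarith [sq_nonneg (‖O y x‖)]
            _ = 4 * (‖O y x‖)^2 := by ring
        have hD : (∑ y : Bits n, (‖O y y‖)^2)
            ≤ ∑ y : Bits n, ∑ x : Bits n, (‖O y x‖)^2 :=
          Finset.sum_le_sum fun y _ =>
            Finset.single_le_sum (f := fun x => ‖O y x‖ ^ 2)
              (fun x _ => sq_nonneg _) (Finset.mem_univ y)
        have h2 : (∑ x : Bits n, ∑ y : Bits n, 2 * (ρ x x).re * (‖O y y‖)^2)
            ≤ 2 * (∑ y : Bits n, ∑ x : Bits n, (‖O y x‖)^2) := by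
          have e1 : (∑ x : Bits n, ∑ y : Bits n, 2 * (ρ x x).re * (‖O y y‖)^2)
              = 2 * (∑ y : Bits n, (‖O y y‖)^2) :=
            calc (∑ x : Bits n, ∑ y : Bits n, 2 * (ρ x x).re * (‖O y y‖)^2)
                = ∑ x : Bits n,
                  (ρ x x).re * (2 * ∑ y : Bits n, (‖O y y‖)^2) := by
                  refine Finset.sum_congr rfl fun x _ => ?_
                  rw [Finset.mul_sum, Finset.mul_sum]
                  refine Finset.sum_congr rfl fun y _ => ?_
                  ring
              _ = (∑ x : Bits n, (ρ x x).re)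
                  * (2 * ∑ y : Bits n, (‖O y y‖)^2) := by
                  rw [← Finset.sum_mul]
              _ = 2 * (∑ y : Bits n, (‖O y y‖)^2) := by rw [htr1, one_mul]
          rw [e1]
          linarith [hD]
        linarith [h1, h2]
    _ = 6 * (∑ y : Bits n, ∑ x : Bits n, (‖O y x‖)^2) := by ring
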